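/- Let A = F_2[x,v,t]/(x^{n+1}, v^2 - ((n+1)/2 mod 2)·t·x^{n-1}) with n odd, and let Δ: A → A be F_2-linear with Δ(x) = Δ(v) = Δ(t) = 0, satisfying the BV relation Δ(ab) = Δ(a)b + aΔ(b) + [a,b], where [·,·] is a symmetric biderivation with [x,v] = 1, [x,t] = 0, [v,t] = 0, and [x,x] = [v,v] = [t,t] = 0. Then Δ(x^a v^b t^c) = a·b·x^{a-1} t^c (mod 2) for all 0 ≤ a ≤ n, b ∈ {0,1}, c ≥ 0. -/
import Mathlib


/-- In `A = F₂[x,v,t]/(x^{n+1}, v² - ((n+1)/2 mod 2)·t·x^{n-1})` with `n` odd, a BV operator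
Δ vanishing on generators, and bracket a symmetric biderivation with `[x,v]=1`, `[x,t]=0`,
`[v,t]=0`, one has `Δ(xᵃvᵇt^c) = ab·x^{a-1}t^c` (mod 2). -/
theorem stmt4 (A : Type*) [CommRing A] (hchar : (2 : A) = 0)
    (n : ℕ) (hn : Odd n)
    (x v t : A) (hxn : x ^ (n + 1) = 0)
    (hv2 : v ^ 2 = (((n + 1) / 2) % 2) • (t * x ^ (n - 1)))
    (Δ : A → A) (hΔadd : ∀ a b : A, Δ (a + b) = Δ a + Δ b)
    (br : A → A → A)
    (hsymm : ∀ a b : A, br a b = br b a)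
    (haddr : ∀ a b c : A, br a (b + c) = br a b + br a c)
    (hleib : ∀ a b c : A, br a (b * c) = br a b * c + br a c * b)
    (hBV : ∀ a b : A, Δ (a * b) = Δ a * b + a * Δ b + br a b)
    (hΔx : Δ x = 0) (hΔv : Δ v = 0) (hΔt : Δ t = 0)
    (hxv : br x v = 1) (hxt : br x t = 0) (hvt : br v t = 0)
    (hxx : br x x = 0) (hvv : br v v = 0) (htt : br t t = 0) :
    ∀ a b c : ℕ, a ≤ n → b ≤ 1 →
      Δ (x ^ a * v ^ b * t ^ c) = (a * b) • (x ^ (a - 1) * t ^ c) := by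
  -- br with 1 is zero
  have hbr1 : ∀ a : A, br a 1 = 0 := by
    intro a
    have h := hleib a 1 1
    simp only [mul_one] at h
    exact (left_eq_add.mp h)
  -- Δ 1 = 0
  have hΔ1 : Δ (1 : A) = 0 := by
    have h := hBV 1 1
    simp only [mul_one, one_mul, hbr1, add_zero] at h
    exact (left_eq_add.mp h)
  -- br x (x^a) = 0
  have hbrxxa : ∀ a : ℕ, br x (x ^ a) = 0 := by
    intro a
    induction a with
    | zero => simpa using hbr1 x
    | succ k ih =>
      rw [pow_succ, hleib, hxx, ih]
      ring
  -- Δ (x^a) = 0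
  have hΔxa : ∀ a : ℕ, Δ (x ^ a) = 0 := by
    intro a
    induction a with
    | zero => simpa using hΔ1
    | succ k ih =>
      rw [pow_succ, mul_comm (x ^ k) x, hBV, hΔx, ih, hbrxxa]
      ring
  -- br t (x^a) = 0
  have hbrtxa : ∀ a : ℕ, br t (x ^ a) = 0 := by
    intro a
    induction a with
    | zero => simpa using hbr1 t
    | succ k ih =>
      rw [pow_succ, hleib, ih, hsymm t x, hxt]
      ring
  -- br v (x^a) = a • x^(a-1)
  have hbrvxa : ∀ a : ℕ, br v (x ^ a) = a • x ^ (a - 1) := by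
    intro a
    induction a with
    | zero => simpa using hbr1 v
    | succ k ih =>
      rw [pow_succ, hleib, ih, hsymm v x, hxv]
      cases k with
      | zero => simp
      | succ m =>
        have : (m + 1) • x ^ (m + 1 - 1) * x = (m + 1) • x ^ (m + 1) := by
          rw [smul_mul_assoc, Nat.add_sub_cancel, ← pow_succ]
        rw [one_mul, this]
        simp [succ_nsmul, Nat.add_sub_cancel]
        ring
  -- br (t^c) anything via induction on c needs left Leibniz: use symmetry
  have hleibl : ∀ a b c : A, br (a * b) c = br a c * b + br b c * a := by
    intro a b c
    rw [hsymm, hleib, hsymm c a, hsymm c b]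
  -- br z (t^c) = 0 when br z t = 0
  have hbrtc : ∀ z : A, br z t = 0 → ∀ c : ℕ, br z (t ^ c) = 0 := by
    intro z hz c
    induction c with
    | zero => simpa using hbr1 z
    | succ k ih =>
      rw [pow_succ, hleib, hz, ih]
      ring
  -- Δ (t^c) = 0
  have hΔtc : ∀ c : ℕ, Δ (t ^ c) = 0 := by
    intro c
    induction c with
    | zero => simpa using hΔ1
    | succ k ih =>
      rw [pow_succ, mul_comm (t ^ k) t, hBV, hΔt, ih, hbrtc t htt]
      ring
  -- main
  intro a b c ha hb
  interval_cases b
  · -- b = 0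
    have h1 : br (x ^ a) (t ^ c) = 0 := by
      apply hbrtc
      rw [hsymm (x ^ a) t, hbrtxa]
    rw [pow_zero, mul_one, hBV, hΔxa, hΔtc, h1]
    simp
  · -- b = 1
    have hΔxav : Δ (x ^ a * v) = a • x ^ (a - 1) := by
      rw [hBV, hΔxa, hΔv, hsymm (x ^ a) v, hbrvxa]
      ring
    have hbrt : br (x ^ a * v) t = 0 := by
      rw [hleibl]
      rw [hsymm x t] at hxt
      rw [hsymm (x ^ a) t, hbrtxa, hvt]
      ring
    rw [pow_one, hBV, hΔxav, hΔtc, hbrtc _ hbrt]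
    rw [mul_one, smul_mul_assoc]
    ring
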